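/- If a picture p is tessellated by pictures of DC₁ (i.e., its cell set can be partitioned into rectangular domains each of whose induced subpictures is in DC₁), then p itself is in DC₁. -/

import Mathlib

/-- The alphabet Δ₁ = {a, b, c, d}. -/
inductive Del : Type
  | a | b | c | d
deriving DecidableEq

/-- Row cancellation: pairs [a,b] and [c,d]. -/
def rowStep (w w' : List Del) : Prop :=
  ∃ (u v : List Del),
    (w = u ++ [Del.a, Del.b] ++ v ∨ w = u ++ [Del.c, Del.d] ++ v) ∧ w' = u ++ v

/-- The row Dyck language D^Row. -/
def DRow (w : List Del) : Prop := Relation.ReflTransGen rowStep w []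

/-- Column cancellation: pairs [a,c] and [b,d]. -/
def colStep (w w' : List Del) : Prop :=
  ∃ (u v : List Del),
    (w = u ++ [Del.a, Del.c] ++ v ∨ w = u ++ [Del.b, Del.d] ++ v) ∧ w' = u ++ v

/-- The column Dyck language D^Col. -/
def DCol (w : List Del) : Prop := Relation.ReflTransGen colStep w []

/-- Row i (of length n) of a picture. -/
def row (p : ℕ → ℕ → Del) (n i : ℕ) : List Del := (List.range n).map (p i)

/-- Column j (of length m) of a picture. -/
def col (p : ℕ → ℕ → Del) (m j : ℕ) : List Del :=
  (List.range m).map (fun i => p i j)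

/-- The Dyck crossword language DC₁: nonempty pictures all of whose rows
are in D^Row and all of whose columns are in D^Col. -/
def DC (m n : ℕ) (p : ℕ → ℕ → Del) : Prop :=
  1 ≤ m ∧ 1 ≤ n ∧ (∀ i < m, DRow (row p n i)) ∧ (∀ j < n, DCol (col p m j))

/-- A domain `(i, j, i', j')` of a picture contains cell `(r, s)` iff
`i ≤ r ≤ i'` and `j ≤ s ≤ j'`. -/
def inDom (d : ℕ × ℕ × ℕ × ℕ) (r s : ℕ) : Prop :=
  d.1 ≤ r ∧ r ≤ d.2.2.1 ∧ d.2.1 ≤ s ∧ s ≤ d.2.2.2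

/-- The subpicture of `p` determined by a domain. -/
def subpic (p : ℕ → ℕ → Del) (d : ℕ × ℕ × ℕ × ℕ) : ℕ → ℕ → Del :=
  fun r s => p (d.1 + r) (d.2.1 + s)

lemma rowStep_append {w w' : List Del} (x : List Del) (h : rowStep w w') :
    rowStep (w ++ x) (w' ++ x) := by
  obtain ⟨u, v, h1, h2⟩ := h
  exact ⟨u, v ++ x, by rcases h1 with h | h <;> simp [h, h2]⟩

lemma colStep_append {w w' : List Del} (x : List Del) (h : colStep w w') :
    colStep (w ++ x) (w' ++ x) := by
  obtain ⟨u, v, h1, h2⟩ := h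
  exact ⟨u, v ++ x, by rcases h1 with h | h <;> simp [h, h2]⟩

lemma DRow_append {u v : List Del} (hu : DRow u) (hv : DRow v) : DRow (u ++ v) := by
  have h1 : Relation.ReflTransGen rowStep (u ++ v) ([] ++ v) :=
    Relation.ReflTransGen.lift (· ++ v) (fun a b h => rowStep_append v h) u [] hu
  simpa [DRow] using h1.trans hv

lemma DCol_append {u v : List Del} (hu : DCol u) (hv : DCol v) : DCol (u ++ v) := by
  have h1 : Relation.ReflTransGen colStep (u ++ v) ([] ++ v) :=
    Relation.ReflTransGen.lift (· ++ v) (fun a b h => colStep_append v h) u [] hu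
  simpa [DCol] using h1.trans hv

lemma dyck_line {L : List Del → Prop} (hnil : L [])
    (happ : ∀ u v, L u → L v → L (u ++ v)) (n : ℕ) (f : ℕ → Del)
    (Good : ℕ → Prop)
    (hstep : ∀ s, Good s → s < n → ∃ e, s ≤ e ∧ e < n ∧
      L ((List.range (e + 1 - s)).map (fun c => f (s + c))) ∧ Good (e + 1)) :
    ∀ k s, n - s ≤ k → Good s → L ((List.range (n - s)).map (fun c => f (s + c))) := by
  intro k
  induction k with
  | zero =>
    intro s hk _
    have h0 : n - s = 0 := Nat.le_zero.mp hk
    simpa [h0] using hnil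
  | succ k ih =>
    intro s hk hg
    by_cases hs : s < n
    · obtain ⟨e, hse, hen, hseg, hg'⟩ := hstep s hg hs
      have hsplit : n - s = (e + 1 - s) + (n - (e + 1)) := by omega
      have hEq : (List.range (n - s)).map (fun c => f (s + c)) =
          ((List.range (e + 1 - s)).map (fun c => f (s + c))) ++
          ((List.range (n - (e + 1))).map (fun c => f (e + 1 + c))) := by
        rw [hsplit, List.range_add, List.map_append, List.map_map]
        congr 1
        apply List.map_congr_left
        intro c _
        simp only [Function.comp]
        congr 1
        omega
      rw [hEq]
      exact happ _ _ hseg (ih (e + 1) (by omega) hg')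
    · have h0 : n - s = 0 := by omega
      simpa [h0] using hnil

/-- If a picture is tessellated by DC₁ pictures (its cells are partitioned
into rectangular domains whose induced subpictures all lie in DC₁),
then the picture itself is in DC₁. -/
theorem DC_closed_under_tessellation (m n : ℕ) (hm : 1 ≤ m) (hn : 1 ≤ n)
    (p : ℕ → ℕ → Del) (ds : Set (ℕ × ℕ × ℕ × ℕ))
    (hbounds : ∀ d ∈ ds, d.1 ≤ d.2.2.1 ∧ d.2.2.1 < m ∧ d.2.1 ≤ d.2.2.2 ∧ d.2.2.2 < n)
    (hpart : ∀ r < m, ∀ s < n, ∃! d, d ∈ ds ∧ inDom d r s)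
    (hsub : ∀ d ∈ ds, DC (d.2.2.1 - d.1 + 1) (d.2.2.2 - d.2.1 + 1) (subpic p d)) :
    DC m n p := by
  refine ⟨hm, hn, ?_, ?_⟩
  · -- rows
    intro i hi
    have key := dyck_line (L := DRow) Relation.ReflTransGen.refl
      (fun u v => DRow_append) n (p i)
      (fun s => ∀ d ∈ ds, ∀ t, s ≤ t → t < n → inDom d i t → s ≤ d.2.1)
      ?_ n 0 (by omega) (fun d _ t _ _ _ => Nat.zero_le _)
    · have : row p n i = (List.range (n - 0)).map (fun c => p i (0 + c)) := by
        simp [row]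
      rw [this]; exact key
    · intro s hg hs
      obtain ⟨d, ⟨hd, hdom⟩, _⟩ := hpart i hi s hs
      obtain ⟨hd1i, hid2, hd21s, hsd22⟩ := hdom
      obtain ⟨hb1, hb2, hb3, hb4⟩ := hbounds d hd
      have hle : s ≤ d.2.1 := hg d hd s le_rfl hs ⟨hd1i, hid2, hd21s, hsd22⟩
      have heq : d.2.1 = s := le_antisymm hd21s hle
      refine ⟨d.2.2.2, by omega, hb4, ?_, ?_⟩
      · obtain ⟨_, _, hrows, _⟩ := hsub d hd
        have hr := hrows (i - d.1) (by omega)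
        have hEq : (List.range (d.2.2.2 + 1 - s)).map (fun c => p i (s + c)) =
            row (subpic p d) (d.2.2.2 - d.2.1 + 1) (i - d.1) := by
          unfold row subpic
          have h1 : d.2.2.2 + 1 - s = d.2.2.2 - d.2.1 + 1 := by omega
          rw [h1]
          apply List.map_congr_left
          intro c _
          congr 1 <;> omega
        rw [hEq]; exact hr
      · intro d' hd' t ht htn hdom'
        by_contra hlt
        push_neg at hlt
        have h1 : s ≤ d'.2.1 := hg d' hd' t (by omega) htn hdom'
        obtain ⟨a1, a2, a3, a4⟩ := hdom'
        have hdomd' : inDom d' i d'.2.1 := ⟨a1, a2, le_rfl, by omega⟩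
        have hdomd : inDom d i d'.2.1 := ⟨hd1i, hid2, by omega, by omega⟩
        have hcol : d'.2.1 < n := by omega
        obtain ⟨d'', _, hu2⟩ := hpart i hi d'.2.1 hcol
        have hdd : d' = d := (hu2 d' ⟨hd', hdomd'⟩).trans (hu2 d ⟨hd, hdomd⟩).symm
        have : d'.2.2.2 = d.2.2.2 := by rw [hdd]
        omega
  · -- columns
    intro j hj
    have key := dyck_line (L := DCol) Relation.ReflTransGen.refl
      (fun u v => DCol_append) m (fun r => p r j)
      (fun s => ∀ d ∈ ds, ∀ t, s ≤ t → t < m → inDom d t j → s ≤ d.1)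
      ?_ m 0 (by omega) (fun d _ t _ _ _ => Nat.zero_le _)
    · have : col p m j = (List.range (m - 0)).map (fun c => p (0 + c) j) := by
        simp [col]
      rw [this]; exact key
    · intro s hg hs
      obtain ⟨d, ⟨hd, hdom⟩, _⟩ := hpart s hs j hj
      obtain ⟨hd1s, hsd2, hd21j, hjd22⟩ := hdom
      obtain ⟨hb1, hb2, hb3, hb4⟩ := hbounds d hd
      have hle : s ≤ d.1 := hg d hd s le_rfl hs ⟨hd1s, hsd2, hd21j, hjd22⟩
      have heq : d.1 = s := le_antisymm hd1s hle
      refine ⟨d.2.2.1, by omega, hb2, ?_, ?_⟩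
      · obtain ⟨_, _, _, hcols⟩ := hsub d hd
        have hc := hcols (j - d.2.1) (by omega)
        have hEq : (List.range (d.2.2.1 + 1 - s)).map (fun c => p (s + c) j) =
            col (subpic p d) (d.2.2.1 - d.1 + 1) (j - d.2.1) := by
          unfold col subpic
          have h1 : d.2.2.1 + 1 - s = d.2.2.1 - d.1 + 1 := by omega
          rw [h1]
          apply List.map_congr_left
          intro c _
          congr 1 <;> omega
        rw [hEq]; exact hc
      · intro d' hd' t ht htm hdom'
        by_contra hlt
        push_neg at hlt
        have h1 : s ≤ d'.1 := hg d' hd' t (by omega) htm hdom'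
        obtain ⟨a1, a2, a3, a4⟩ := hdom'
        have hdomd' : inDom d' d'.1 j := ⟨le_rfl, by omega, a3, a4⟩
        have hdomd : inDom d d'.1 j := ⟨by omega, by omega, hd21j, hjd22⟩
        have hrow : d'.1 < m := by omega
        obtain ⟨d'', _, hu2⟩ := hpart d'.1 hrow j hj
        have hdd : d' = d := (hu2 d' ⟨hd', hdomd'⟩).trans (hu2 d ⟨hd, hdomd⟩).symm
        have : d'.2.2.1 = d.2.2.1 := by rw [hdd]
        omega
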